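/- Let V be a finite-dimensional complex inner product space, T : V → V a self-adjoint linear operator, and v ∈ V a nonzero vector. Then the function t ↦ ‖exp(tT) v‖ attains a global minimum on ℝ if and only if the orbit {exp(tT) v : t ∈ ℝ} is a closed subset of V. -/

import Mathlib

open NormedSpace Filter Topology
open scoped Nat

lemma kn_exp_apply_eigen {V : Type*} [NormedAddCommGroup V] [NormedSpace ℂ V]
    [CompleteSpace V] (A : V →L[ℂ] V) (x : V) (μ : ℂ) (h : A x = μ • x) :
    NormedSpace.exp A x = Complex.exp μ • x := by
  have hpow : ∀ n : ℕ, (A ^ n) x = μ ^ n • x := by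
    intro n
    induction n with
    | zero => simp
    | succ n ih =>
      rw [pow_succ, ContinuousLinearMap.mul_apply, h, map_smul, ih, smul_smul, mul_comm,
        ← pow_succ]
  have hs : Summable fun n : ℕ => (n !⁻¹ : ℂ) • A ^ n := expSeries_summable' A
  have key := (ContinuousLinearMap.apply ℂ V x).map_tsum hs
  simp only [ContinuousLinearMap.apply_apply] at key
  rw [Complex.exp_eq_exp_ℂ, exp_eq_tsum (𝕂 := ℂ), exp_eq_tsum (𝕂 := ℂ)]
  show (∑' n : ℕ, (n !⁻¹ : ℂ) • A ^ n) x = (∑' n : ℕ, (n !⁻¹ : ℂ) • μ ^ n) • x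
  rw [key]
  simp only [ContinuousLinearMap.smul_apply, hpow, smul_smul]
  have h2 : Summable fun n : ℕ => (n !⁻¹ : ℂ) * μ ^ n := by
    simpa [smul_eq_mul] using expSeries_summable' (𝕂 := ℂ) μ
  rw [Summable.tsum_smul_const h2]
  simp [smul_eq_mul]

lemma kn_norm_sum_sq {V : Type*} [NormedAddCommGroup V] [InnerProductSpace ℂ V]
    {n : ℕ} (b : OrthonormalBasis (Fin n) ℂ V) (a : Fin n → ℂ) :
    ‖∑ i, a i • b i‖ ^ 2 = ∑ i, ‖a i‖ ^ 2 := by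
  have h := b.orthonormal.inner_sum a a Finset.univ
  rw [inner_self_eq_norm_sq_to_K] at h
  have hc : ∀ i, (starRingEnd ℂ) (a i) * a i = ((‖a i‖ ^ 2 : ℝ) : ℂ) := fun i => by
    rw [← Complex.normSq_eq_conj_mul_self]
    norm_cast
    simp [Complex.normSq_eq_norm_sq]
  simp_rw [hc] at h
  rw [← Complex.ofReal_sum, ← RCLike.ofReal_pow] at h
  exact RCLike.ofReal_injective (K := ℂ) h

/-- **One-parameter Kempf–Ness theorem.** For a self-adjoint operator `T` on a
finite-dimensional complex inner product space and nonzero `v`, the function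
`t ↦ ‖exp(tT) v‖` attains a global minimum on `ℝ` if and only if the orbit
`{exp(tT) v : t ∈ ℝ}` is closed in `V`. -/
theorem kempfNess_min_iff_closed_orbit (V : Type*) [NormedAddCommGroup V]
    [InnerProductSpace ℂ V] [FiniteDimensional ℂ V]
    (T : V →L[ℂ] V) (hT : IsSelfAdjoint T) (v : V) (hv : v ≠ 0) :
    (∃ t₀ : ℝ, ∀ t : ℝ,
        ‖NormedSpace.exp ((t₀ : ℂ) • T) v‖ ≤ ‖NormedSpace.exp ((t : ℂ) • T) v‖) ↔
      IsClosed {x : V | ∃ t : ℝ, x = NormedSpace.exp ((t : ℂ) • T) v} := by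
  classical
  obtain ⟨n, hn⟩ : ∃ n, Module.finrank ℂ V = n := ⟨_, rfl⟩
  have hSym : (T : V →ₗ[ℂ] V).IsSymmetric := hT.isSymmetric
  set b := hSym.eigenvectorBasis hn with hb
  set lam := hSym.eigenvalues hn with hlam
  set c : Fin n → ℂ := fun i => b.repr v i with hc
  have hTb : ∀ i, T (b i) = (lam i : ℂ) • b i := fun i => hSym.apply_eigenvectorBasis hn i
  -- coordinate formula for orbit points
  have hu : ∀ t : ℝ, NormedSpace.exp ((t : ℂ) • T) v
      = ∑ i, (Complex.exp (t * lam i) * c i) • b i := by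
    intro t
    conv_lhs => rw [← b.sum_repr v, map_sum]
    refine Finset.sum_congr rfl fun i _ => ?_
    rw [map_smul, kn_exp_apply_eigen ((t : ℂ) • T) (b i) (t * lam i) (by
      rw [ContinuousLinearMap.smul_apply, hTb i, smul_smul]), smul_smul, mul_comm]
  -- the Kempf–Ness function (squared)
  set F : ℝ → ℝ := fun t => ∑ i, Real.exp (t * lam i) ^ 2 * ‖c i‖ ^ 2 with hF
  have hnorm : ∀ t : ℝ, ‖NormedSpace.exp ((t : ℂ) • T) v‖ ^ 2 = F t := by
    intro t
    rw [hu t, kn_norm_sum_sq]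
    refine Finset.sum_congr rfl fun i _ => ?_
    rw [norm_mul, mul_pow, ← Complex.ofReal_mul, Complex.norm_exp,
      Complex.ofReal_re]
  -- reformulate the minimum condition via `F`
  have hmin_iff : (∃ t₀ : ℝ, ∀ t : ℝ,
      ‖NormedSpace.exp ((t₀ : ℂ) • T) v‖ ≤ ‖NormedSpace.exp ((t : ℂ) • T) v‖)
      ↔ ∃ t₀ : ℝ, ∀ t : ℝ, F t₀ ≤ F t := by
    constructor
    · rintro ⟨t₀, h⟩
      exact ⟨t₀, fun t => by
        rw [← hnorm, ← hnorm]
        exact pow_le_pow_left₀ (norm_nonneg _) (h t) 2⟩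
    · rintro ⟨t₀, h⟩
      refine ⟨t₀, fun t => ?_⟩
      have := h t
      rw [← hnorm, ← hnorm] at this
      exact (pow_le_pow_iff_left₀ (norm_nonneg _) (norm_nonneg _) two_ne_zero).mp this
  rw [hmin_iff]
  have hexF : ∃ i, c i ≠ 0 := by
    by_contra hall
    push_neg at hall
    apply hv
    rw [← b.sum_repr v]
    simp only [← hc]
    simp [hall]
  -- nonnegativity of the terms of F
  have hterm_nonneg : ∀ (t : ℝ) (i : Fin n), 0 ≤ Real.exp (t * lam i) ^ 2 * ‖c i‖ ^ 2 :=
    fun t i => mul_nonneg (sq_nonneg _) (sq_nonneg _)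
  -- continuity of F
  have hFcont : Continuous F := by
    refine continuous_finset_sum _ fun i _ => ?_
    exact ((Real.continuous_exp.comp ((continuous_id.mul continuous_const))).pow 2).mul
      continuous_const
  -- continuity of the orbit map
  have hUeq : (fun t : ℝ => NormedSpace.exp ((t : ℂ) • T) v)
      = fun t => ∑ i, (Complex.exp ((t * lam i : ℝ) : ℂ) * c i) • b i := by
    funext t
    rw [hu t]
    norm_cast
  have hUcont : Continuous (fun t : ℝ => NormedSpace.exp ((t : ℂ) • T) v) := by
    rw [hUeq]
    refine continuous_finset_sum _ fun i _ => ?_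
    exact ((Complex.continuous_exp.comp
      (Complex.continuous_ofReal.comp (continuous_id.mul continuous_const))).mul
      continuous_const).smul continuous_const
  -- the one-sided case: no minimum and the orbit is not closed
  have side : ∀ ε : ℝ, ε ≠ 0 → (∀ i, c i ≠ 0 → 0 ≤ ε * lam i) → (∃ i, c i ≠ 0 ∧ 0 < ε * lam i) →
      (¬ (∃ t₀ : ℝ, ∀ t : ℝ, F t₀ ≤ F t) ∧
       ¬ IsClosed {x : V | ∃ t : ℝ, x = NormedSpace.exp ((t : ℂ) • T) v}) := by
    rintro ε hεne hε1 ⟨j, hcj, hεj⟩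
    have hstrict : ∀ t₀ : ℝ, F (t₀ - ε) < F t₀ := by
      intro t₀
      refine Finset.sum_lt_sum (fun i _ => ?_) ⟨j, Finset.mem_univ j, ?_⟩
      · by_cases hci : c i = 0
        · simp [hci]
        · have h1 : (t₀ - ε) * lam i ≤ t₀ * lam i := by nlinarith [hε1 i hci]
          exact mul_le_mul_of_nonneg_right
            (pow_le_pow_left₀ (Real.exp_nonneg _) (Real.exp_le_exp.mpr h1) 2) (sq_nonneg _)
      · have h1 : (t₀ - ε) * lam j < t₀ * lam j := by nlinarith
        have h2 : Real.exp ((t₀ - ε) * lam j) ^ 2 < Real.exp (t₀ * lam j) ^ 2 :=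
          pow_lt_pow_left₀ (Real.exp_lt_exp.mpr h1) (Real.exp_nonneg _) two_ne_zero
        have h3 : (0 : ℝ) < ‖c j‖ ^ 2 := pow_pos (norm_pos_iff.mpr hcj) 2
        exact mul_lt_mul_of_pos_right h2 h3
    constructor
    · rintro ⟨t₀, hmin⟩
      exact absurd (hmin (t₀ - ε)) (not_le.mpr (hstrict t₀))
    · intro hcl
      set d : Fin n → ℂ := fun i => if lam i = 0 then c i else 0 with hd
      set w : V := ∑ i, d i • b i with hw
      have htend : Tendsto (fun s : ℝ => NormedSpace.exp (((-(ε * s) : ℝ) : ℂ) • T) v)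
          atTop (𝓝 w) := by
        simp_rw [hu]
        rw [hw]
        refine tendsto_finset_sum _ fun i _ => ?_
        by_cases hci : c i = 0
        · have hdi : d i = 0 := by simp [hd, hci]
          simp [hci, hdi]
        by_cases hli : lam i = 0
        · have hdi : d i = c i := by simp [hd, hli]
          rw [hdi]
          simp [hli]
        · have hdi : d i = 0 := by simp [hd, hli]
          rw [hdi, zero_smul]
          have hpos : 0 < ε * lam i :=
            lt_of_le_of_ne (hε1 i hci) (Ne.symm (mul_ne_zero hεne hli))
          have hexp : Tendsto (fun s : ℝ => Complex.exp ((-(ε * s) * lam i : ℝ) : ℂ))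
              atTop (𝓝 0) := by
            rw [tendsto_zero_iff_norm_tendsto_zero]
            have hre : ∀ s : ℝ, ‖Complex.exp ((-(ε * s) * lam i : ℝ) : ℂ)‖
                = Real.exp (-(ε * s) * lam i) := fun s => by
              rw [Complex.norm_exp, Complex.ofReal_re]
            simp_rw [hre]
            have harg : Tendsto (fun s : ℝ => -(ε * s) * lam i) atTop atBot := by
              have : (fun s : ℝ => -(ε * s) * lam i) = fun s : ℝ => s * (-(ε * lam i)) := by
                funext s; ring
              rw [this]
              exact tendsto_id.atTop_mul_const_of_neg' (by linarith)
            exact Real.tendsto_exp_atBot.comp harg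
          have := (hexp.mul_const (c i)).smul_const (b i)
          simpa using this
      have hworb : w ∈ {x : V | ∃ t : ℝ, x = NormedSpace.exp ((t : ℂ) • T) v} := by
        have hclos : w ∈ closure {x : V | ∃ t : ℝ, x = NormedSpace.exp ((t : ℂ) • T) v} :=
          mem_closure_of_tendsto htend (Filter.Eventually.of_forall fun s => ⟨-(ε * s), rfl⟩)
        rwa [hcl.closure_eq] at hclos
      obtain ⟨s, hs⟩ := hworb
      have hws : ‖w‖ ^ 2 = F s := by rw [hs, hnorm]
      have hwd : ‖w‖ ^ 2 = ∑ i, ‖d i‖ ^ 2 := kn_norm_sum_sq b d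
      have hlt : ∑ i, ‖d i‖ ^ 2 < F s := by
        refine Finset.sum_lt_sum (fun i _ => ?_) ⟨j, Finset.mem_univ j, ?_⟩
        · by_cases hli : lam i = 0
          · have hdi : d i = c i := by simp [hd, hli]
            rw [hdi, hli]
            simp
          · have hdi : d i = 0 := by simp [hd, hli]
            rw [hdi]
            simpa using hterm_nonneg s i
        · have hlj : lam j ≠ 0 := by
            intro h
            rw [h, mul_zero] at hεj
            exact lt_irrefl 0 hεj
          have hdj : d j = 0 := by simp [hd, hlj]
          rw [hdj]
          have : (0 : ℝ) < Real.exp (s * lam j) ^ 2 * ‖c j‖ ^ 2 :=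
            mul_pos (pow_pos (Real.exp_pos _) 2) (pow_pos (norm_pos_iff.mpr hcj) 2)
          simpa using this
      have hcontra : F s < F s := by
        calc F s = ‖w‖ ^ 2 := hws.symm
        _ = ∑ i, ‖d i‖ ^ 2 := hwd
        _ < F s := hlt
      exact lt_irrefl _ hcontra
  by_cases h0 : ∀ i, c i ≠ 0 → lam i = 0
  · -- all eigenvalues vanish on the support of `v`: the orbit is a single point
    have hu0 : ∀ t : ℝ, NormedSpace.exp ((t : ℂ) • T) v = v := by
      intro t
      rw [hu t]
      conv_rhs => rw [← b.sum_repr v]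
      refine Finset.sum_congr rfl fun i _ => ?_
      show (Complex.exp (t * lam i) * c i) • b i = c i • b i
      by_cases hci : c i = 0
      · simp [hci]
      · rw [h0 i hci]
        simp
    have horb : {x : V | ∃ t : ℝ, x = NormedSpace.exp ((t : ℂ) • T) v} = {v} := by
      ext x
      simp only [Set.mem_setOf_eq, Set.mem_singleton_iff]
      constructor
      · rintro ⟨t, rfl⟩; exact hu0 t
      · rintro rfl; exact ⟨0, (hu0 0).symm⟩
    refine iff_of_true ⟨0, fun t => ?_⟩ (horb ▸ isClosed_singleton)
    have hFt : F t = F 0 := by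
      rw [← hnorm 0, ← hnorm t, hu0 0, hu0 t]
    rw [hFt]
  push_neg at h0
  obtain ⟨i₀, hci₀, hli₀⟩ := h0
  by_cases hA : ∃ i, c i ≠ 0 ∧ 0 < lam i
  · by_cases hB : ∃ i, c i ≠ 0 ∧ lam i < 0
    · -- mixed signs: minimum exists and orbit is closed
      obtain ⟨ip, hcip, hlip⟩ := hA
      obtain ⟨im, hcim, hlim'⟩ := hB
      have hbound : ∀ (i : Fin n) (t : ℝ), Real.exp (t * lam i) ^ 2 * ‖c i‖ ^ 2 ≤ F t :=
        fun i t => Finset.single_le_sum (fun j _ => hterm_nonneg t j) (Finset.mem_univ i)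
      have hup : Tendsto F atTop atTop := by
        refine tendsto_atTop_mono (fun t => hbound ip t) ?_
        have h1 : Tendsto (fun t : ℝ => Real.exp (t * lam ip)) atTop atTop :=
          Real.tendsto_exp_atTop.comp (tendsto_id.atTop_mul_const' hlip)
        have h2 : Tendsto (fun t : ℝ => Real.exp (t * lam ip) ^ 2) atTop atTop := by
          simp_rw [pow_two]
          exact h1.atTop_mul_atTop₀ h1
        exact h2.atTop_mul_const (pow_pos (norm_pos_iff.mpr hcip) 2)
      have hdown : Tendsto F atBot atTop := by
        refine tendsto_atTop_mono (fun t => hbound im t) ?_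
        have h1 : Tendsto (fun t : ℝ => Real.exp (t * lam im)) atBot atTop :=
          Real.tendsto_exp_atTop.comp (tendsto_id.atBot_mul_const_of_neg' hlim')
        have h2 : Tendsto (fun t : ℝ => Real.exp (t * lam im) ^ 2) atBot atTop := by
          simp_rw [pow_two]
          exact h1.atTop_mul_atTop₀ h1
        exact h2.atTop_mul_const (pow_pos (norm_pos_iff.mpr hcim) 2)
      have hcoc : Tendsto F (cocompact ℝ) atTop := by
        rw [cocompact_eq_atBot_atTop, tendsto_sup]
        exact ⟨hdown, hup⟩
      refine iff_of_true (hFcont.exists_forall_le hcoc) ?_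
      -- closedness via sequences
      refine IsSeqClosed.isClosed ?_
      intro x p hxmem hxp
      choose ts hts using hxmem
      have hnx : Tendsto (fun k => ‖x k‖ ^ 2) atTop (𝓝 (‖p‖ ^ 2)) := (hxp.norm).pow 2
      obtain ⟨M, hM⟩ := hnx.bddAbove_range
      have hFM : ∀ k, F (ts k) ≤ M := by
        intro k
        rw [← hnorm, ← hts k]
        exact hM ⟨k, rfl⟩
      obtain ⟨K, hK, hKsub⟩ := Filter.mem_cocompact.mp (hcoc.eventually (eventually_gt_atTop M))
      have hts_mem : ∀ k, ts k ∈ K := by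
        intro k
        by_contra h
        exact absurd (hKsub h) (not_lt.mpr (hFM k))
      obtain ⟨tstar, -, g, hg, hgt⟩ := hK.tendsto_subseq hts_mem
      have h1 : Tendsto (fun k => x (g k)) atTop (𝓝 p) := hxp.comp hg.tendsto_atTop
      have h2 : Tendsto (fun k => x (g k)) atTop
          (𝓝 (NormedSpace.exp ((tstar : ℂ) • T) v)) := by
        have := (hUcont.tendsto tstar).comp hgt
        refine this.congr fun k => ?_
        exact (hts (g k)).symm
      exact ⟨tstar, tendsto_nhds_unique h1 h2⟩
    · -- all eigenvalues nonnegative on the support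
      push_neg at hB
      obtain ⟨hP, hQ⟩ := side 1 one_ne_zero
        (fun i hci => by simpa using le_of_not_gt fun h => (hB i hci).not_gt h)
        ⟨(hA.choose), hA.choose_spec.1, by simpa using hA.choose_spec.2⟩
      exact iff_of_false (by rwa [] at hP) hQ
  · -- all eigenvalues nonpositive on the support
    push_neg at hA
    have hneg : lam i₀ < 0 := lt_of_le_of_ne (hA i₀ hci₀) hli₀
    obtain ⟨hP, hQ⟩ := side (-1) (by norm_num)
      (fun i hci => by nlinarith [hA i hci])
      ⟨i₀, hci₀, by nlinarith⟩
    exact iff_of_false hP hQ
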